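/- Let (Y, A, X) be a recollement of abelian categories, and let Λ be a small category. If A has exact Λ-colimits (Λ-colimits exist and the colimit functor [Λ, A] → A is exact), then Y and X have exact Λ-colimits. -/

import Mathlib

open CategoryTheory Limits

universe v u u₁ u₂ u₃

/-- A recollement of categories: adjoint triples `(i^*, i_*, i^!)` and `(j_!, j^*, j_*)`,
with `i_*`, `j_!`, `j_*` fully faithful and the essential image of `i_*` equal to the
kernel of `j^*`. -/
structure Recollement (Y : Type u₁) (A : Type u₂) (X : Type u₃)
    [Category.{v} Y] [Category.{v} A] [Category.{v} X] where
  /-- `i_* : Y ⥤ A` -/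
  iStar : Y ⥤ A
  /-- `i^* : A ⥤ Y` -/
  iUp : A ⥤ Y
  /-- `i^! : A ⥤ Y` -/
  iShriek : A ⥤ Y
  /-- `j^* : A ⥤ X` -/
  jUp : A ⥤ X
  /-- `j_! : X ⥤ A` -/
  jLower : X ⥤ A
  /-- `j_* : X ⥤ A` -/
  jRight : X ⥤ A
  adj_i₁ : iUp ⊣ iStar
  adj_i₂ : iStar ⊣ iShriek
  adj_j₁ : jLower ⊣ jUp
  adj_j₂ : jUp ⊣ jRight
  iStar_full : iStar.Full
  iStar_faithful : iStar.Faithful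
  jLower_full : jLower.Full
  jLower_faithful : jLower.Faithful
  jRight_full : jRight.Full
  jRight_faithful : jRight.Faithful
  essImage_iff : ∀ M : A, iStar.essImage M ↔ IsZero (jUp.obj M)

variable {Y : Type u₁} {A : Type u₂} {X : Type u₃}
  [Category.{v} Y] [Category.{v} A] [Category.{v} X]

/-- The class `C = Ker i^*` of the TTF triple associated to a recollement. -/
def Recollement.C (R : Recollement Y A X) : A → Prop := fun M => IsZero (R.iUp.obj M)

/-- The class `T = Im i_*` of the TTF triple associated to a recollement. -/
def Recollement.T (R : Recollement Y A X) : A → Prop := fun M => R.iStar.essImage M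

/-- The class `F = Ker i^!` of the TTF triple associated to a recollement. -/
def Recollement.F (R : Recollement Y A X) : A → Prop := fun M => IsZero (R.iShriek.obj M)

/-- An (additive) functor between abelian categories is exact if it preserves finite
limits and finite colimits. -/
def IsExactFunctor {C D : Type*} [Category C] [Category D] (G : C ⥤ D) : Prop :=
  Nonempty (PreservesFiniteLimits G) ∧ Nonempty (PreservesFiniteColimits G)

/-- An abelian category has exact `Λ`-colimits if `Λ`-colimits exist and the colimit
functor `(Λ ⥤ C) ⥤ C` is exact (being a left adjoint it is automatically right exact,
so exactness amounts to preservation of finite limits). -/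
structure HasExactColimitsOfShape' (Λ : Type v) [SmallCategory Λ]
    (C : Type u) [Category.{v} C] [Abelian C] : Prop where
  hasColimitsOfShape : HasColimitsOfShape Λ C
  exact' : letI := hasColimitsOfShape
    Nonempty (PreservesFiniteLimits (colim (J := Λ) (C := C)))

/-- An abelian category has exact `Λ`-limits if `Λ`-limits exist and the limit functor
`(Λ ⥤ C) ⥤ C` is exact (being a right adjoint it is automatically left exact, so
exactness amounts to preservation of finite colimits). -/
structure HasExactLimitsOfShape' (Λ : Type v) [SmallCategory Λ]
    (C : Type u) [Category.{v} C] [Abelian C] : Prop where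
  hasLimitsOfShape : HasLimitsOfShape Λ C
  exact' : letI := hasLimitsOfShape
    Nonempty (PreservesFiniteColimits (lim (J := Λ) (C := C)))

/-- In a recollement of abelian categories, if the middle term has exact `Λ`-colimits,
then so do the outer terms. -/
theorem recollement_hasExactColimitsOfShape [Abelian Y] [Abelian A] [Abelian X]
    (R : Recollement Y A X) (Λ : Type v) [SmallCategory Λ]
    (hA : HasExactColimitsOfShape' Λ A) :
    HasExactColimitsOfShape' Λ Y ∧ HasExactColimitsOfShape' Λ X := by
  obtain ⟨hcA, hEA⟩ := hA
  haveI := hcA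
  haveI := hEA.some
  haveI : R.iStar.Full := R.iStar_full
  haveI : R.iStar.Faithful := R.iStar_faithful
  haveI : R.jRight.Full := R.jRight_full
  haveI : R.jRight.Faithful := R.jRight_faithful
  haveI : Reflective R.iStar :=
    { toFull := ‹_›, toFaithful := ‹_›, L := R.iUp, adj := R.adj_i₁ }
  haveI : Reflective R.jRight :=
    { toFull := ‹_›, toFaithful := ‹_›, L := R.jUp, adj := R.adj_j₂ }
  haveI hY : HasColimitsOfShape Λ Y := hasColimitsOfShape_of_reflective R.iStar
  haveI hX : HasColimitsOfShape Λ X := hasColimitsOfShape_of_reflective R.jRight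
  -- adjunction-provided (co)limit preservation
  haveI : PreservesColimitsOfSize.{v, v} R.iStar := R.adj_i₂.leftAdjoint_preservesColimits
  haveI : PreservesLimitsOfSize.{v, v} R.iStar := R.adj_i₁.rightAdjoint_preservesLimits
  haveI : PreservesColimitsOfSize.{v, v} R.jUp := R.adj_j₂.leftAdjoint_preservesColimits
  haveI : PreservesLimitsOfSize.{v, v} R.jUp := R.adj_j₁.rightAdjoint_preservesLimits
  haveI : PreservesLimitsOfSize.{v, v} R.jRight := R.adj_j₂.rightAdjoint_preservesLimits
  -- exactness of colim on Y
  haveI : PreservesFiniteLimits (colim (J := Λ) (C := Y)) := by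
    haveI : PreservesFiniteLimits ((Functor.whiskeringRight Λ Y A).obj R.iStar) :=
      ⟨fun J _ _ => inferInstance⟩
    haveI : PreservesFiniteLimits
        ((Functor.whiskeringRight Λ Y A).obj R.iStar ⋙ colim (J := Λ) (C := A)) :=
      comp_preservesFiniteLimits _ _
    haveI : PreservesFiniteLimits (colim (J := Λ) (C := Y) ⋙ R.iStar) :=
      preservesFiniteLimits_of_natIso (preservesColimitNatIso R.iStar).symm
    constructor
    intro J _ _
    haveI : ReflectsLimitsOfShape J R.iStar := reflectsLimitsOfShape_of_reflectsIsomorphisms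
    exact preservesLimitsOfShape_of_reflects_of_preserves _ R.iStar
  -- exactness of colim on X
  haveI : PreservesFiniteLimits (colim (J := Λ) (C := X)) := by
    set W : (Λ ⥤ X) ⥤ (Λ ⥤ A) := (Functor.whiskeringRight Λ X A).obj R.jRight with hW
    set W' : (Λ ⥤ A) ⥤ (Λ ⥤ X) := (Functor.whiskeringRight Λ A X).obj R.jUp with hW'
    let adjW : W' ⊣ W := R.adj_j₂.whiskerRight Λ
    haveI : IsIso adjW.counit := Adjunction.counit_isIso_of_R_fully_faithful _
    let e : W ⋙ (colim (J := Λ) (C := A) ⋙ R.jUp) ≅ colim (J := Λ) (C := X) :=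
      Functor.isoWhiskerLeft W (preservesColimitNatIso R.jUp) ≪≫
        (Functor.associator W W' colim).symm ≪≫
        Functor.isoWhiskerRight (asIso adjW.counit) colim ≪≫ Functor.leftUnitor _
    haveI : PreservesFiniteLimits W := ⟨fun J _ _ => inferInstance⟩
    haveI : PreservesFiniteLimits R.jUp := ⟨fun J _ _ => inferInstance⟩
    haveI : PreservesFiniteLimits (colim (J := Λ) (C := A) ⋙ R.jUp) :=
      comp_preservesFiniteLimits _ _
    haveI : PreservesFiniteLimits (W ⋙ (colim (J := Λ) (C := A) ⋙ R.jUp)) :=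
      comp_preservesFiniteLimits _ _
    exact preservesFiniteLimits_of_natIso e
  exact ⟨⟨hY, ⟨inferInstance⟩⟩, ⟨hX, ⟨inferInstance⟩⟩⟩
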